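/- arXiv:1706.05736 — 2 statements merged into one kernel-verified Lean document; each statement's English description precedes it below -/
import Mathlib

section
/- Let A be an n×n positive-semidefinite matrix over ℝ or ℂ and let Ω be any n×k matrix. Let P be the orthogonal projector onto the range of A^{1/2}Ω, which is given explicitly by P = (A^{1/2}Ω)(Ω*AΩ)†(A^{1/2}Ω)*. Then the Nyström approximation satisfies AΩ((Ω*AΩ)†)Ω*A = A^{1/2} P A^{1/2}. -/
open Matrix MeasureTheory ProbabilityTheory
open scoped ENNReal NNReal ComplexOrder Classical

namespace PsdSketch

variable {𝕜 : Type*} [RCLike 𝕜]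

/-- The four Penrose conditions characterizing the Moore–Penrose pseudoinverse. -/
def IsMoorePenrose {m k : ℕ} (M : Matrix (Fin m) (Fin k) 𝕜)
    (X : Matrix (Fin k) (Fin m) 𝕜) : Prop :=
  M * X * M = M ∧ X * M * X = X ∧ (M * X)ᴴ = M * X ∧ (X * M)ᴴ = X * M

/-- The Moore–Penrose pseudoinverse `M†` (the unique matrix satisfying the
Penrose conditions). -/
noncomputable def pinv {m k : ℕ} (M : Matrix (Fin m) (Fin k) 𝕜) :
    Matrix (Fin k) (Fin m) 𝕜 :=
  if h : ∃ X, IsMoorePenrose M X then h.choose else 0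

/-- The Nyström approximation `Â = A Ω ((Ω* A Ω)†) Ω* A`. -/
noncomputable def nystrom {n k : ℕ} (A : Matrix (Fin n) (Fin n) 𝕜)
    (Ω : Matrix (Fin n) (Fin k) 𝕜) : Matrix (Fin n) (Fin n) 𝕜 :=
  A * Ω * pinv (Ωᴴ * A * Ω) * Ωᴴ * A

/-- The `i`-th singular value of a square matrix, 0-indexed and listed in weakly
decreasing order (so `sval M 0 = σ₁(M)`), with `sval M i = 0` for `i ≥ n`. -/
noncomputable def sval {n : ℕ} (M : Matrix (Fin n) (Fin n) 𝕜) (i : ℕ) : ℝ :=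
  if h : i < n then
    Real.sqrt
      ((Matrix.posSemidef_conjTranspose_mul_self M).1.eigenvalues
        (Tuple.sort (Matrix.posSemidef_conjTranspose_mul_self M).1.eigenvalues
          (Fin.rev ⟨i, h⟩)))
  else 0

/-- The Schatten `p`-norm: the `ℓ_p` norm of the vector of singular values. -/
noncomputable def schatten {n : ℕ} (p : ℝ≥0∞) (M : Matrix (Fin n) (Fin n) 𝕜) : ℝ :=
  if p = ∞ then sval M 0
  else (∑ i ∈ Finset.range n, sval M i ^ p.toReal) ^ (1 / p.toReal)

/-- `σ_{r+1}^{(p)}(M)`, the optimal rank-`r` approximation error of `M` in the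
Schatten `p`-norm: `(Σ_{i > r} σ_i(M)^p)^{1/p}` (for `p = ∞`, `σ_{r+1}(M)`). -/
noncomputable def tailNorm {n : ℕ} (p : ℝ≥0∞) (M : Matrix (Fin n) (Fin n) 𝕜)
    (r : ℕ) : ℝ :=
  if p = ∞ then sval M r
  else (∑ i ∈ Finset.Ico r n, sval M i ^ p.toReal) ^ (1 / p.toReal)

/-- `B` is a (simultaneous) best rank-`r` approximation of `M` with respect to every
Schatten `p`-norm; this is the defining property of an `r`-truncated SVD `⟦M⟧_r`. -/
def IsBestRankApprox {n : ℕ} (M B : Matrix (Fin n) (Fin n) 𝕜) (r : ℕ) : Prop :=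
  B.rank ≤ r ∧
    ∀ p : ℝ≥0∞, 1 ≤ p → ∀ C : Matrix (Fin n) (Fin n) 𝕜, C.rank ≤ r →
      schatten p (M - B) ≤ schatten p (M - C)

/-- `⟦M⟧_r`: a best rank-`r` approximation of `M` (an `r`-truncated SVD). -/
noncomputable def truncate {n : ℕ} (M : Matrix (Fin n) (Fin n) 𝕜) (r : ℕ) :
    Matrix (Fin n) (Fin n) 𝕜 :=
  if h : ∃ B, IsBestRankApprox M B r then h.choose else 0

/-- The distribution of an `n × k` random matrix with independent standard normal
entries (matrices identified with functions `Fin n → Fin k → ℝ`). -/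
noncomputable def gaussianEnsemble (n k : ℕ) : Measure (Fin n → Fin k → ℝ) :=
  Measure.pi fun _ => Measure.pi fun _ => gaussianReal 0 1

/-- The positive-semidefinite square root, as `Matrix.PosSemidef.sqrt` was defined in
Mathlib (Dec 2024); that declaration has since been removed. -/
noncomputable def _root_.Matrix.PosSemidef.sqrt {n : Type*} [Fintype n] [DecidableEq n]
    {A : Matrix n n 𝕜} (hA : A.PosSemidef) : Matrix n n 𝕜 :=
  hA.1.eigenvectorUnitary.1 * diagonal ((↑) ∘ (√·) ∘ hA.1.eigenvalues) *
    (star hA.1.eigenvectorUnitary : Matrix n n 𝕜)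

lemma exists_isMoorePenrose_of_isHermitian {m : ℕ} {M : Matrix (Fin m) (Fin m) 𝕜}
    (hM : M.IsHermitian) : ∃ X, IsMoorePenrose M X := by
  classical
  set U : Matrix (Fin m) (Fin m) 𝕜 := (hM.eigenvectorUnitary : Matrix (Fin m) (Fin m) 𝕜) with hU
  have hsU : star U * U = 1 := Matrix.mem_unitaryGroup_iff'.mp hM.eigenvectorUnitary.2
  set d : Fin m → 𝕜 := RCLike.ofReal ∘ hM.eigenvalues with hd
  set e : Fin m → 𝕜 := RCLike.ofReal ∘ (fun i => (hM.eigenvalues i)⁻¹) with he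
  have hspec : M = U * diagonal d * star U := hM.spectral_theorem
  have key : ∀ f g : Fin m → 𝕜,
      (U * diagonal f * star U) * (U * diagonal g * star U)
        = U * diagonal (f * g) * star U := by
    intro f g
    calc (U * diagonal f * star U) * (U * diagonal g * star U)
        = U * diagonal f * (star U * U) * diagonal g * star U := by
          simp only [Matrix.mul_assoc]
      _ = U * diagonal (f * g) * star U := by
          rw [hsU, Matrix.mul_one, Matrix.mul_assoc U, diagonal_mul_diagonal]
          rfl
  have hct : ∀ f : Fin m → 𝕜, star f = f →
      (U * diagonal f * star U)ᴴ = U * diagonal f * star U := by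
    intro f hf
    simp [conjTranspose_mul, Matrix.star_eq_conjTranspose, diagonal_conjTranspose, hf,
      Matrix.mul_assoc]
  have hde : d * e * d = d := by
    funext i
    simp only [hd, he, Pi.mul_apply, Function.comp_apply, ← RCLike.ofReal_mul]
    norm_cast
    rcases eq_or_ne (hM.eigenvalues i) 0 with h | h
    · simp [h]
    · field_simp
  have hed : e * d * e = e := by
    funext i
    simp only [hd, he, Pi.mul_apply, Function.comp_apply, ← RCLike.ofReal_mul]
    norm_cast
    rcases eq_or_ne (hM.eigenvalues i) 0 with h | h
    · simp [h]
    · field_simp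
  refine ⟨U * diagonal e * star U, ?_, ?_, ?_, ?_⟩
  · rw [hspec, key, key, hde]
  · rw [hspec, key, key, hed]
  · rw [hspec, key]
    exact hct _ (by rw [hd, he]; funext i; simp [← RCLike.ofReal_mul, RCLike.conj_ofReal])
  · rw [hspec, key]
    exact hct _ (by rw [hd, he]; funext i; simp [← RCLike.ofReal_mul, RCLike.conj_ofReal])

theorem stmt6 {𝕜 : Type*} [RCLike 𝕜] {n k : ℕ} (A : Matrix (Fin n) (Fin n) 𝕜)
    (hA : A.PosSemidef) (Ω : Matrix (Fin n) (Fin k) 𝕜)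
    (P : Matrix (Fin n) (Fin n) 𝕜)
    (hP : P = (hA.sqrt * Ω) * pinv (Ωᴴ * A * Ω) * (hA.sqrt * Ω)ᴴ) :
    P.IsHermitian ∧ P * P = P ∧
      LinearMap.range P.mulVecLin = LinearMap.range (hA.sqrt * Ω).mulVecLin ∧
      nystrom A Ω = hA.sqrt * P * hA.sqrt := by
  classical
  set B : Matrix (Fin n) (Fin k) 𝕜 := hA.sqrt * Ω with hB
  set M : Matrix (Fin k) (Fin k) 𝕜 := Ωᴴ * A * Ω with hM
  have hsqrtH : hA.sqrtᴴ = hA.sqrt := by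
    have hd : star ((RCLike.ofReal : ℝ → 𝕜) ∘ (√·) ∘ hA.1.eigenvalues)
        = (RCLike.ofReal : ℝ → 𝕜) ∘ (√·) ∘ hA.1.eigenvalues := by
      funext i; simp
    simp only [Matrix.PosSemidef.sqrt, conjTranspose_mul, Matrix.star_eq_conjTranspose,
      conjTranspose_conjTranspose, diagonal_conjTranspose, hd, Matrix.mul_assoc]
  have hA2 : hA.sqrt * hA.sqrt = A := by
    have hsU : star (hA.1.eigenvectorUnitary : Matrix (Fin n) (Fin n) 𝕜)
        * (hA.1.eigenvectorUnitary : Matrix (Fin n) (Fin n) 𝕜) = 1 :=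
      Matrix.mem_unitaryGroup_iff'.mp hA.1.eigenvectorUnitary.2
    have hs : A = (hA.1.eigenvectorUnitary : Matrix (Fin n) (Fin n) 𝕜)
        * diagonal ((RCLike.ofReal : ℝ → 𝕜) ∘ hA.1.eigenvalues)
        * star (hA.1.eigenvectorUnitary : Matrix (Fin n) (Fin n) 𝕜) := hA.1.spectral_theorem
    have hd : (fun i => ((RCLike.ofReal : ℝ → 𝕜) ∘ (√·) ∘ hA.1.eigenvalues) i
        * ((RCLike.ofReal : ℝ → 𝕜) ∘ (√·) ∘ hA.1.eigenvalues) i)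
        = (RCLike.ofReal : ℝ → 𝕜) ∘ hA.1.eigenvalues := by
      funext i
      simp only [Function.comp_apply, ← RCLike.ofReal_mul,
        Real.mul_self_sqrt (hA.eigenvalues_nonneg i)]
    conv_rhs => rw [hs]
    simp only [Matrix.PosSemidef.sqrt, Matrix.mul_assoc]
    rw [← Matrix.mul_assoc (star _) (hA.1.eigenvectorUnitary : Matrix (Fin n) (Fin n) 𝕜),
      hsU, Matrix.one_mul, ← Matrix.mul_assoc (diagonal _) (diagonal _),
      diagonal_mul_diagonal, hd]
  have hBB : Bᴴ * B = M := by
    rw [hB, hM, conjTranspose_mul, hsqrtH, Matrix.mul_assoc,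
      ← Matrix.mul_assoc hA.sqrt, hA2, ← Matrix.mul_assoc]
  have hMherm : M.IsHermitian := by
    rw [← hBB]; exact isHermitian_conjTranspose_mul_self B
  have hex : ∃ X, IsMoorePenrose M X := exists_isMoorePenrose_of_isHermitian hMherm
  have hMP : IsMoorePenrose M (pinv M) := by
    rw [pinv, dif_pos hex]; exact hex.choose_spec
  set X := pinv M with hX
  obtain ⟨h1, h2, h3, h4⟩ := hMP
  have hMXh : M * Xᴴ = X * M := by
    conv_rhs => rw [← h4]
    rw [conjTranspose_mul, hMherm.eq]
  have rBB1 : ∀ {p : ℕ} (C : Matrix (Fin k) (Fin p) 𝕜), Bᴴ * (B * C) = M * C := by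
    intro p C; rw [← Matrix.mul_assoc, hBB]
  have rMXM1 : M * (X * M) = M := by
    rw [← Matrix.mul_assoc, h1]
  have rXMX1 : ∀ {p : ℕ} (C : Matrix (Fin k) (Fin p) 𝕜), X * (M * (X * C)) = X * C := by
    intro p C
    rw [← Matrix.mul_assoc, ← Matrix.mul_assoc, h2]
  have h0 : (B * X * M - B)ᴴ * (B * X * M - B) = 0 := by
    simp only [conjTranspose_sub, Matrix.sub_mul, Matrix.mul_sub, conjTranspose_mul, hMherm.eq,
      Matrix.mul_assoc]
    simp only [rBB1, hBB, rMXM1, sub_self]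
  have hBXM : B * X * M = B := sub_eq_zero.mp (conjTranspose_mul_self_eq_zero.mp h0)
  have hMXB : M * (Xᴴ * Bᴴ) = Bᴴ := by
    have h5 := congrArg conjTranspose hBXM
    simpa only [conjTranspose_mul, hMherm.eq, Matrix.mul_assoc] using h5
  have hPB : P * B = B := by
    rw [hP]
    calc B * X * Bᴴ * B = B * X * (Bᴴ * B) := by simp only [Matrix.mul_assoc]
      _ = B * X * M := by rw [hBB]
      _ = B := hBXM
  refine ⟨?_, ?_, ?_, ?_⟩
  · show Pᴴ = P
    rw [hP]
    calc (B * X * Bᴴ)ᴴ = B * (Xᴴ * Bᴴ) := by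
          simp only [conjTranspose_mul, conjTranspose_conjTranspose, Matrix.mul_assoc]
      _ = B * X * M * (Xᴴ * Bᴴ) := by rw [hBXM]
      _ = B * X * (M * (Xᴴ * Bᴴ)) := Matrix.mul_assoc (B * X) M (Xᴴ * Bᴴ)
      _ = B * X * Bᴴ := by rw [hMXB]
  · rw [hP]
    calc B * X * Bᴴ * (B * X * Bᴴ) = B * (X * (Bᴴ * (B * (X * Bᴴ)))) := by
          simp only [Matrix.mul_assoc]
      _ = B * (X * (M * (X * Bᴴ))) := by rw [rBB1]
      _ = B * (X * Bᴴ) := by rw [rXMX1]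
      _ = B * X * Bᴴ := (Matrix.mul_assoc B X Bᴴ).symm
  · apply le_antisymm
    · have hfact : P = B * (X * Bᴴ) := by rw [hP, Matrix.mul_assoc]
      rw [hfact, Matrix.mulVecLin_mul]
      exact LinearMap.range_comp_le_range _ _
    · conv_lhs => rw [← hPB]
      rw [Matrix.mulVecLin_mul]
      exact LinearMap.range_comp_le_range _ _
  · rw [hP]
    show A * Ω * pinv (Ωᴴ * A * Ω) * Ωᴴ * A = _
    rw [← hM, ← hX]
    have rS : ∀ {p : ℕ} (C : Matrix (Fin n) (Fin p) 𝕜),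
        hA.sqrt * (hA.sqrt * C) = A * C := by
      intro p C; rw [← Matrix.mul_assoc, hA2]
    simp only [hB, conjTranspose_mul, hsqrtH, Matrix.mul_assoc, rS, hA2]

end PsdSketch
end

section
/- Let A and B be n×n matrices over ℝ or ℂ with rank(B) ≤ r. Then for every index i ≥ 1, the singular values satisfy σ_{i+r}(A) ≤ σ_i(A − B). -/
open Matrix MeasureTheory ProbabilityTheory
open scoped ENNReal NNReal ComplexOrder Classical

namespace PsdSketch

variable {𝕜 : Type*} [RCLike 𝕜]

variable {n : ℕ}

private lemma sval_nonneg (M : Matrix (Fin n) (Fin n) 𝕜) (i : ℕ) : 0 ≤ sval M i := by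
  unfold sval; split; exacts [Real.sqrt_nonneg _, le_rfl]

private lemma norm_sq_repr (b : OrthonormalBasis (Fin n) 𝕜 (EuclideanSpace 𝕜 (Fin n)))
    (x : EuclideanSpace 𝕜 (Fin n)) : ‖x‖ ^ 2 = ∑ j, ‖b.repr x j‖ ^ 2 := by
  rw [← b.repr.norm_map x, EuclideanSpace.norm_eq, Real.sq_sqrt (by positivity)]

private lemma repr_span_eq_zero (b : OrthonormalBasis (Fin n) 𝕜 (EuclideanSpace 𝕜 (Fin n)))
    (S : Finset (Fin n)) {x : EuclideanSpace 𝕜 (Fin n)}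
    (hx : x ∈ Submodule.span 𝕜 (⇑b '' ↑S)) {j : Fin n} (hj : j ∉ S) : b.repr x j = 0 := by
  induction hx using Submodule.span_induction with
  | mem y hy =>
    obtain ⟨i, hi, rfl⟩ := hy
    rw [b.repr_apply_apply]
    exact b.orthonormal.2 (fun h : j = i => hj (h ▸ hi))
  | zero => simp
  | add x y hx hy h1 h2 => simp [h1, h2]
  | smul a x hx h => simp [h]

private lemma finrank_span_basis_image (b : OrthonormalBasis (Fin n) 𝕜 (EuclideanSpace 𝕜 (Fin n)))
    (S : Finset (Fin n)) :
    Module.finrank 𝕜 (Submodule.span 𝕜 (⇑b '' ↑S)) = S.card := by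
  have hli : LinearIndependent 𝕜 (fun i : (↑S : Set (Fin n)) => b ↑i) :=
    (b.orthonormal.linearIndependent).comp _ Subtype.coe_injective
  rw [Set.image_eq_range, finrank_span_eq_card hli]
  simp

private lemma norm_map_sq_eq_sum (M : Matrix (Fin n) (Fin n) 𝕜) (x : EuclideanSpace 𝕜 (Fin n)) :
    ‖Matrix.toEuclideanLin M x‖ ^ 2 =
      ∑ j, (Matrix.posSemidef_conjTranspose_mul_self M).1.eigenvalues j *
        ‖(Matrix.posSemidef_conjTranspose_mul_self M).1.eigenvectorBasis.repr x j‖ ^ 2 := by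
  set hH := (Matrix.posSemidef_conjTranspose_mul_self M).1 with hHdef
  set b := hH.eigenvectorBasis with hbdef
  have hb : ∀ j, Matrix.toEuclideanLin (Mᴴ * M) (b j)
      = ((hH.eigenvalues j : 𝕜)) • b j := by
    intro j
    apply (WithLp.equiv 2 (Fin n → 𝕜)).injective
    rw [WithLp.equiv_apply, Matrix.ofLp_toEuclideanLin_apply, hH.mulVec_eigenvectorBasis j]
    ext i
    simp [RCLike.real_smul_eq_coe_mul, hbdef]
  have expand : Matrix.toEuclideanLin (Mᴴ * M) x
      = ∑ j, b.repr x j • ((hH.eigenvalues j : 𝕜) • b j) := by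
    conv_lhs => rw [← b.sum_repr x]
    rw [map_sum]
    simp_rw [_root_.map_smul, hb]
  have hterm : ∀ (c : 𝕜) (r : ℝ), RCLike.re (c * ((r : 𝕜) * (starRingEnd 𝕜) c)) = r * ‖c‖ ^ 2 := by
    intro c r
    have h : c * ((r : 𝕜) * (starRingEnd 𝕜) c) = (r : 𝕜) * ((‖c‖ : 𝕜) ^ 2) := by
      rw [← RCLike.mul_conj]; ring
    rw [h, ← RCLike.ofReal_pow, ← RCLike.ofReal_mul, RCLike.ofReal_re]
  calc ‖Matrix.toEuclideanLin M x‖ ^ 2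
      = RCLike.re (inner 𝕜 (Matrix.toEuclideanLin M x) (Matrix.toEuclideanLin M x) : 𝕜) :=
        (inner_self_eq_norm_sq _).symm
    _ = RCLike.re (inner 𝕜 x (Matrix.toEuclideanLin (Mᴴ * M) x) : 𝕜) := by
        have h1 : Matrix.toEuclideanLin (Mᴴ * M) x
            = Matrix.toEuclideanLin Mᴴ (Matrix.toEuclideanLin M x) := by
          apply (WithLp.equiv 2 (Fin n → 𝕜)).injective
          simp [Matrix.ofLp_toEuclideanLin_apply, Matrix.mulVec_mulVec]
        rw [h1, Matrix.toEuclideanLin_conjTranspose_eq_adjoint,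
          LinearMap.adjoint_inner_right]
    _ = ∑ j, hH.eigenvalues j * ‖b.repr x j‖ ^ 2 := by
        rw [expand, inner_sum]
        simp_rw [inner_smul_right, ← inner_conj_symm x (b _), ← b.repr_apply_apply, map_sum]
        exact Finset.sum_congr rfl fun j _ => hterm _ _



private lemma sq_le_on_span (M : Matrix (Fin n) (Fin n) 𝕜) {k : ℕ} (hk : k < n) :
    ∃ W : Submodule 𝕜 (EuclideanSpace 𝕜 (Fin n)),
      n - k ≤ Module.finrank 𝕜 W ∧
      ∀ x ∈ W, ‖Matrix.toEuclideanLin M x‖ ≤ sval M k * ‖x‖ := by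
  set hH := (Matrix.posSemidef_conjTranspose_mul_self M).1 with hHdef
  set b := hH.eigenvectorBasis with hbdef
  set σp := Tuple.sort hH.eigenvalues with hσ
  set a : Fin n := Fin.rev ⟨k, hk⟩ with ha
  have hev : ∀ i, 0 ≤ hH.eigenvalues i :=
    (Matrix.posSemidef_conjTranspose_mul_self M).eigenvalues_nonneg
  have hsv : sval M k = Real.sqrt (hH.eigenvalues (σp a)) := by
    unfold sval; rw [dif_pos hk]
  set S : Finset (Fin n) := (Finset.Iic a).image σp with hS
  refine ⟨Submodule.span 𝕜 (⇑b '' ↑S), ?_, ?_⟩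
  · rw [finrank_span_basis_image, hS, Finset.card_image_of_injective _ σp.injective,
      Fin.card_Iic]
    have hav : (a : ℕ) = n - (k + 1) := Fin.val_rev _
    omega
  · intro x hx
    have hsq : ‖Matrix.toEuclideanLin M x‖ ^ 2 ≤ hH.eigenvalues (σp a) * ‖x‖ ^ 2 := by
      rw [norm_map_sq_eq_sum, norm_sq_repr b x, Finset.mul_sum]
      refine Finset.sum_le_sum fun j _ => ?_
      by_cases hj : j ∈ S
      · obtain ⟨j', hj', rfl⟩ := Finset.mem_image.1 hj
        have hmono : hH.eigenvalues (σp j') ≤ hH.eigenvalues (σp a) :=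
          Tuple.monotone_sort hH.eigenvalues (Finset.mem_Iic.1 hj')
        exact mul_le_mul_of_nonneg_right hmono (by positivity)
      · rw [repr_span_eq_zero b S hx hj]; simp
    calc ‖Matrix.toEuclideanLin M x‖ = Real.sqrt (‖Matrix.toEuclideanLin M x‖ ^ 2) :=
          (Real.sqrt_sq (norm_nonneg _)).symm
      _ ≤ Real.sqrt (hH.eigenvalues (σp a) * ‖x‖ ^ 2) := Real.sqrt_le_sqrt hsq
      _ = sval M k * ‖x‖ := by
          rw [Real.sqrt_mul (hev _), Real.sqrt_sq (norm_nonneg _), hsv]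

private lemma sval_le_of_forall (M : Matrix (Fin n) (Fin n) 𝕜) {k : ℕ} (hk : k < n)
    (W : Submodule 𝕜 (EuclideanSpace 𝕜 (Fin n))) (hW : n - k ≤ Module.finrank 𝕜 W)
    {c : ℝ} (hc : 0 ≤ c)
    (hbd : ∀ x ∈ W, ‖Matrix.toEuclideanLin M x‖ ≤ c * ‖x‖) : sval M k ≤ c := by
  set hH := (Matrix.posSemidef_conjTranspose_mul_self M).1 with hHdef
  set b := hH.eigenvectorBasis with hbdef
  set σp := Tuple.sort hH.eigenvalues with hσ
  set a : Fin n := Fin.rev ⟨k, hk⟩ with ha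
  have hsv : sval M k = Real.sqrt (hH.eigenvalues (σp a)) := by
    unfold sval; rw [dif_pos hk]
  set S : Finset (Fin n) := (Finset.Ici a).image σp with hS
  set U : Submodule 𝕜 (EuclideanSpace 𝕜 (Fin n)) := Submodule.span 𝕜 (⇑b '' ↑S) with hU
  have hUrank : Module.finrank 𝕜 U = k + 1 := by
    rw [hU, finrank_span_basis_image, hS, Finset.card_image_of_injective _ σp.injective,
      Fin.card_Ici]
    have hav : (a : ℕ) = n - (k + 1) := Fin.val_rev _
    omega
  -- find a nonzero vector in U ⊓ W
  have hpos : 0 < Module.finrank 𝕜 (U ⊓ W : Submodule 𝕜 (EuclideanSpace 𝕜 (Fin n))) := by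
    have h1 := Submodule.finrank_sup_add_finrank_inf_eq U W
    have h2 : Module.finrank 𝕜 (U ⊔ W : Submodule 𝕜 (EuclideanSpace 𝕜 (Fin n))) ≤ n := by
      have := Submodule.finrank_le (U ⊔ W)
      rwa [finrank_euclideanSpace_fin] at this
    omega
  obtain ⟨⟨x, hxUW⟩, hx0'⟩ := Module.finrank_pos_iff_exists_ne_zero.1 hpos
  have hx0 : x ≠ 0 := fun h => hx0' (by simpa using h)
  have hxU : x ∈ U := hxUW.1
  have hxW : x ∈ W := hxUW.2
  have hlow : hH.eigenvalues (σp a) * ‖x‖ ^ 2 ≤ ‖Matrix.toEuclideanLin M x‖ ^ 2 := by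
    rw [norm_map_sq_eq_sum, norm_sq_repr b x, Finset.mul_sum]
    refine Finset.sum_le_sum fun j _ => ?_
    by_cases hj : j ∈ S
    · obtain ⟨j', hj', rfl⟩ := Finset.mem_image.1 hj
      have hmono : hH.eigenvalues (σp a) ≤ hH.eigenvalues (σp j') :=
        Tuple.monotone_sort hH.eigenvalues (Finset.mem_Ici.1 hj')
      exact mul_le_mul_of_nonneg_right hmono (by positivity)
    · rw [repr_span_eq_zero b S hxU hj]; simp
  have hup : ‖Matrix.toEuclideanLin M x‖ ^ 2 ≤ c ^ 2 * ‖x‖ ^ 2 := by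
    have h := hbd x hxW
    calc ‖Matrix.toEuclideanLin M x‖ ^ 2 ≤ (c * ‖x‖) ^ 2 :=
          pow_le_pow_left₀ (norm_nonneg _) h 2
      _ = c ^ 2 * ‖x‖ ^ 2 := by ring
  have hxpos : (0:ℝ) < ‖x‖ ^ 2 := by have := norm_pos_iff.2 hx0; positivity
  have hchain : hH.eigenvalues (σp a) * ‖x‖ ^ 2 ≤ c ^ 2 * ‖x‖ ^ 2 := le_trans hlow hup
  have hμ : hH.eigenvalues (σp a) ≤ c ^ 2 := le_of_mul_le_mul_right hchain hxpos
  calc sval M k = Real.sqrt (hH.eigenvalues (σp a)) := hsv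
    _ ≤ Real.sqrt (c ^ 2) := Real.sqrt_le_sqrt hμ
    _ = c := Real.sqrt_sq hc

private lemma finrank_ker_ge (B : Matrix (Fin n) (Fin n) 𝕜) {r : ℕ} (hB : B.rank ≤ r) :
    n - r ≤ Module.finrank 𝕜 (LinearMap.ker (Matrix.toEuclideanLin B)) := by
  have h1 := LinearMap.finrank_range_add_finrank_ker (Matrix.toEuclideanLin B)
  rw [finrank_euclideanSpace_fin] at h1
  have h2 : Module.finrank 𝕜 (LinearMap.range (Matrix.toEuclideanLin B)) = B.rank := by
    have e := WithLp.linearEquiv 2 𝕜 (Fin n → 𝕜)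
    have hcomp : Matrix.toEuclideanLin B
        = ((WithLp.linearEquiv 2 𝕜 (Fin n → 𝕜)).symm.toLinearMap ∘ₗ
            B.mulVecLin ∘ₗ (WithLp.linearEquiv 2 𝕜 (Fin n → 𝕜)).toLinearMap) := rfl
    rw [hcomp, LinearMap.range_comp, LinearMap.range_comp, LinearEquiv.range,
      Submodule.map_top, LinearEquiv.finrank_map_eq]
    rfl
  omega


theorem stmt11 {𝕜 : Type*} [RCLike 𝕜] {n : ℕ} (A B : Matrix (Fin n) (Fin n) 𝕜)
    (r : ℕ) (hB : B.rank ≤ r) :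
    ∀ i : ℕ, sval A (i + r) ≤ sval (A - B) i := by
  intro i
  have hnn : 0 ≤ sval (A - B) i := sval_nonneg _ _
  by_cases h : i + r < n
  · have hi : i < n := by omega
    obtain ⟨W0, hW0rank, hW0⟩ := sq_le_on_span (A - B) hi
    set K := LinearMap.ker (Matrix.toEuclideanLin B) with hK
    have hKrank : n - r ≤ Module.finrank 𝕜 K := finrank_ker_ge B hB
    refine sval_le_of_forall A h (W0 ⊓ K) ?_ hnn ?_
    · have h3 := Submodule.finrank_sup_add_finrank_inf_eq W0 K
      have h4 : Module.finrank 𝕜 (W0 ⊔ K : Submodule 𝕜 (EuclideanSpace 𝕜 (Fin n))) ≤ n := by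
        have := Submodule.finrank_le (W0 ⊔ K)
        rwa [finrank_euclideanSpace_fin] at this
      omega
    · intro x hx
      have hxk : Matrix.toEuclideanLin B x = 0 := hx.2
      have heq : Matrix.toEuclideanLin A x = Matrix.toEuclideanLin (A - B) x := by
        rw [map_sub, LinearMap.sub_apply, hxk, sub_zero]
      rw [heq]
      exact hW0 x hx.1
  · have : sval A (i + r) = 0 := by unfold sval; rw [dif_neg h]
    rw [this]; exact hnn


end PsdSketch
end
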